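/- If the spectra of the partial traces ρ_A for A in a collection 𝒜 are compatible with a joint state ρ on H = (C^d)^⊗n, then for every k ∈ ℕ the symmetric extension σ = ρ^⊗k on H^⊗k satisfies: σ ⪰ 0, tr(σ) = 1, σ is invariant under the diagonal action of S_k permuting copies, and tr(η((α₁...α_ℓ)^A) σ) = Σᵢ (μ_A)ᵢ^ℓ for all ℓ-cycles with ℓ ≤ k and all A ∈ 𝒜. -/

import Mathlib

open Matrix
open scoped ComplexOrder

variable {n d k : ℕ}

/-- Partial trace of an `n`-qudit density matrix onto the subsystems in `A`. -/
noncomputable def ptrace (A : Finset (Fin n))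
    (ρ : Matrix (Fin n → Fin d) (Fin n → Fin d) ℂ) :
    Matrix ({i // i ∈ A} → Fin d) ({i // i ∈ A} → Fin d) ℂ :=
  Matrix.of fun x y => ∑ z : {i // i ∉ A} → Fin d,
    ρ (fun i => if h : i ∈ A then x ⟨i, h⟩ else z ⟨i, h⟩)
      (fun i => if h : i ∈ A then y ⟨i, h⟩ else z ⟨i, h⟩)

/-- The `k`-fold tensor power `ρ^⊗k` of an `n`-partite state, acting on `k` copies. -/
noncomputable def statePow (ρ : Matrix (Fin n → Fin d) (Fin n → Fin d) ℂ) (k : ℕ) :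
    Matrix (Fin k → Fin n → Fin d) (Fin k → Fin n → Fin d) ℂ :=
  Matrix.of fun x y => ∏ c, ρ (x c) (y c)

/-- The operator `η(σ^A)` acting with the permutation `σ ∈ S_k` on the `k` copies of
the subsystems contained in `A`, and trivially on the remaining subsystems. -/
noncomputable def permOnSubsys (d : ℕ) (A : Finset (Fin n)) {k : ℕ} (σ : Equiv.Perm (Fin k)) :
    Matrix (Fin k → Fin n → Fin d) (Fin k → Fin n → Fin d) ℂ :=
  Matrix.of fun x y =>
    if ∀ (c : Fin k) (i : Fin n), x c i = if i ∈ A then y (σ⁻¹ c) i else y c i then 1 else 0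

/-- The diagonal action `τ(π)` of `π ∈ S_k` permuting the `k` copies of the `n`-partite system. -/
noncomputable def copyPerm (n d : ℕ) {k : ℕ} (π : Equiv.Perm (Fin k)) :
    Matrix (Fin k → Fin n → Fin d) (Fin k → Fin n → Fin d) ℂ :=
  Matrix.of fun x y => if x = y ∘ ⇑π⁻¹ then 1 else 0


section AuxTsum
variable {I : Type*} [Fintype I] [DecidableEq I]

noncomputable def Tsum {α : Type*} [Fintype α] [DecidableEq α]
    (σ : Equiv.Perm α) (f : α → Matrix I I ℂ) : ℂ :=
  ∑ u : α → I, ∏ c, f c (u (σ⁻¹ c)) (u c)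


lemma Tsum_contract {α : Type*} [Fintype α] [DecidableEq α]
    (σ : Equiv.Perm α) (f : α → Matrix I I ℂ) (x : α) (hx : σ x ≠ x) (e : I) :
    Tsum σ f =
      Tsum (σ * Equiv.swap (σ⁻¹ x) x)
        (Function.update (Function.update f (σ x) (f x * f (σ x))) x
          (Matrix.single e e 1)) := by
  classical
  set a : α := σ⁻¹ x with ha_def
  set b : α := σ x with hb_def
  have hσa : σ a = x := by simp [ha_def]
  have hax : a ≠ x := fun h => hx (by rw [hb_def, ← h, hσa, h])
  have hbx : b ≠ x := hx
  have hσinvb : σ⁻¹ b = x := by simp [hb_def]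
  set σ' : Equiv.Perm α := σ * Equiv.swap a x with hσ'_def
  have hσ'x : σ'⁻¹ x = x := by
    have h : σ' x = x := by simp [hσ'_def, Equiv.swap_apply_right, hσa]
    exact σ'.injective (by rw [Equiv.Perm.inv_def, Equiv.apply_symm_apply, h])
  have hσ'b : σ'⁻¹ b = a := by
    have h : σ' a = b := by simp [hσ'_def, Equiv.swap_apply_left, hb_def]
    exact σ'.injective (by rw [Equiv.Perm.inv_def, Equiv.apply_symm_apply, h])
  have hσ'c : ∀ c : α, c ≠ x → c ≠ b → σ'⁻¹ c = σ⁻¹ c := by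
    intro c hcx hcb
    have h1 : σ⁻¹ c ≠ a := fun h => hcx (by rw [← hσa, ← h]; simp)
    have h2 : σ⁻¹ c ≠ x := fun h => hcb (by rw [hb_def, ← h]; simp)
    have h : σ' (σ⁻¹ c) = c := by
      rw [hσ'_def, Equiv.Perm.mul_apply, Equiv.swap_apply_of_ne_of_ne h1 h2]; simp
    exact σ'.injective (by rw [Equiv.Perm.inv_def, Equiv.apply_symm_apply, h])
  set f' : α → Matrix I I ℂ :=
    Function.update (Function.update f b (f x * f b)) x (Matrix.single e e 1) with hf'_def
  have hf'x : f' x = Matrix.single e e 1 := by simp [hf'_def]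
  have hf'b : f' b = f x * f b := by
    simp [hf'_def, Function.update_of_ne hbx, Function.update_self]
  have hf'c : ∀ c : α, c ≠ x → c ≠ b → f' c = f c := by
    intro c hcx hcb
    simp [hf'_def, Function.update_of_ne hcx, Function.update_of_ne hcb]
  -- the residual product
  set s : Finset α := (Finset.univ.erase x).erase b with hs_def
  have hxs : x ∉ s := by simp [hs_def]
  have hmemb : b ∈ Finset.univ.erase x := Finset.mem_erase.2 ⟨hbx, Finset.mem_univ b⟩
  set P : (α → I) → ℂ := fun u => ∏ c ∈ s, f c (u (σ⁻¹ c)) (u c) with hP_def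
  have hP : ∀ u u' : α → I, (∀ c, c ≠ x → u c = u' c) → P u = P u' := by
    intro u u' h
    refine Finset.prod_congr rfl fun c hc => ?_
    have hcx : c ≠ x := (Finset.mem_erase.1 (Finset.mem_of_mem_erase hc)).1
    have hcb : c ≠ b := (Finset.mem_erase.1 hc).1
    have h2 : σ⁻¹ c ≠ x := fun hh => hcb (by rw [hb_def, ← hh]; simp)
    rw [h _ hcx, h _ h2]
  have hsplitL : ∀ u : α → I,
      (∏ c, f c (u (σ⁻¹ c)) (u c)) = f x (u a) (u x) * (f b (u x) (u b) * P u) := by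
    intro u
    rw [← Finset.mul_prod_erase Finset.univ _ (Finset.mem_univ x),
      ← Finset.mul_prod_erase _ _ hmemb, ha_def, hσinvb]
  have hsplitR : ∀ u : α → I,
      (∏ c, f' c (u (σ'⁻¹ c)) (u c)) =
        (if e = u x then (1:ℂ) else 0) * ((f x * f b) (u a) (u b) * P u) := by
    intro u
    rw [← Finset.mul_prod_erase Finset.univ _ (Finset.mem_univ x),
      ← Finset.mul_prod_erase _ _ hmemb]
    have h1 : f' x (u (σ'⁻¹ x)) (u x) = (if e = u x then (1:ℂ) else 0) := by
      rw [hσ'x, hf'x, Matrix.single]; by_cases h : e = u x <;> simp [h]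
    have h2 : f' b (u (σ'⁻¹ b)) (u b) = (f x * f b) (u a) (u b) := by rw [hσ'b, hf'b]
    have h3 : (∏ c ∈ s, f' c (u (σ'⁻¹ c)) (u c)) = P u := by
      refine Finset.prod_congr rfl fun c hc => ?_
      have hcx : c ≠ x := (Finset.mem_erase.1 (Finset.mem_of_mem_erase hc)).1
      have hcb : c ≠ b := (Finset.mem_erase.1 hc).1
      rw [hσ'c c hcx hcb, hf'c c hcx hcb]
    rw [h1, h2, h3]
  -- now sum over u via splitting at x
  rw [Tsum, Tsum]
  rw [← Equiv.sum_comp (Equiv.funSplitAt x I).symm fun u => ∏ c, f c (u (σ⁻¹ c)) (u c),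
      ← Equiv.sum_comp (Equiv.funSplitAt x I).symm fun u => ∏ c, f' c (u (σ'⁻¹ c)) (u c)]
  rw [Fintype.sum_prod_type, Fintype.sum_prod_type]
  rw [Finset.sum_comm, Finset.sum_comm (γ := I)]
  refine Finset.sum_congr rfl fun v _ => ?_
  have hval : ∀ (t : I) (c : α) (hc : c ≠ x), (Equiv.funSplitAt x I).symm (t, v) c = v ⟨c, hc⟩ := by
    intro t c hc
    simp [Equiv.funSplitAt, Equiv.piSplitAt, dif_neg hc]
  have hvalx : ∀ t : I, (Equiv.funSplitAt x I).symm (t, v) x = t := by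
    intro t; simp [Equiv.funSplitAt, Equiv.piSplitAt]
  calc (∑ t : I, ∏ c, f c (((Equiv.funSplitAt x I).symm (t, v)) (σ⁻¹ c))
          (((Equiv.funSplitAt x I).symm (t, v)) c))
      = ∑ t : I, f x (v ⟨a, hax⟩) t * (f b t (v ⟨b, hbx⟩) * P ((Equiv.funSplitAt x I).symm (e, v))) := by
        refine Finset.sum_congr rfl fun t _ => ?_
        rw [hsplitL]
        rw [hval t a hax, hval t b hbx, hvalx t,
          hP ((Equiv.funSplitAt x I).symm (t, v)) ((Equiv.funSplitAt x I).symm (e, v))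
            (fun c hc => by rw [hval t c hc, hval e c hc])]
    _ = (f x * f b) (v ⟨a, hax⟩) (v ⟨b, hbx⟩) * P ((Equiv.funSplitAt x I).symm (e, v)) := by
        rw [Matrix.mul_apply, Finset.sum_mul]
        exact Finset.sum_congr rfl fun t _ => by ring
    _ = ∑ t : I, ∏ c, f' c (((Equiv.funSplitAt x I).symm (t, v)) (σ'⁻¹ c))
          (((Equiv.funSplitAt x I).symm (t, v)) c) := by
        rw [Finset.sum_congr rfl (fun t _ => by
          rw [hsplitR, hval t a hax, hval t b hbx, hvalx t,
            hP ((Equiv.funSplitAt x I).symm (t, v)) ((Equiv.funSplitAt x I).symm (e, v))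
              (fun c hc => by rw [hval t c hc, hval e c hc])])]
        simp

lemma Tsum_one {α : Type*} [Fintype α] [DecidableEq α] (f : α → Matrix I I ℂ) :
    Tsum (1 : Equiv.Perm α) f = ∏ c, (f c).trace := by
  simp only [Tsum, inv_one, Equiv.Perm.one_apply, Matrix.trace, Matrix.diag]
  exact (Fintype.prod_sum fun c j => f c j j).symm


lemma Tsum_cycle {α : Type*} [Fintype α] [DecidableEq α] (e : I) (M : Matrix I I ℂ) :
    ∀ (m : ℕ) (σ : Equiv.Perm α) (f : α → Matrix I I ℂ) (N : Matrix I I ℂ) (c₀ : α),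
      σ.IsCycle → σ.support.card = m → c₀ ∈ σ.support → f c₀ = N →
      (∀ c ∈ σ.support, c ≠ c₀ → f c = M) →
      Tsum σ f = (N * M ^ (m - 1)).trace * ∏ c ∈ σ.supportᶜ, (f c).trace := by
  intro m
  induction m using Nat.strong_induction_on with
  | _ m ih =>
  intro σ f N c₀ hσ hm hc₀ hfN hfM
  have hm2 : 2 ≤ m := hm ▸ hσ.two_le_card_support
  have hxc : σ c₀ ≠ c₀ := Equiv.Perm.mem_support.mp hc₀
  have hc₁ : σ c₀ ∈ σ.support := Equiv.Perm.apply_mem_support.mpr hc₀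
  -- rewrite the contracted permutation
  have hσ'eq : σ * Equiv.swap (σ⁻¹ c₀) c₀ = Equiv.swap c₀ (σ c₀) * σ := by
    have : Equiv.swap (σ⁻¹ c₀) c₀ = Equiv.swap (σ⁻¹ c₀) (σ⁻¹ (σ c₀)) := by
      rw [Equiv.Perm.inv_def, Equiv.symm_apply_apply]
    rw [this, Equiv.mul_swap_eq_swap_mul]
    simp
  rw [Tsum_contract σ f c₀ hxc e, hσ'eq]
  set f' : α → Matrix I I ℂ :=
    Function.update (Function.update f (σ c₀) (f c₀ * f (σ c₀))) c₀
      (Matrix.single e e 1) with hf'_def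
  have hf'c₀ : f' c₀ = Matrix.single e e 1 := by simp [hf'_def]
  have htrE : (Matrix.single e e (1:ℂ)).trace = 1 := by
    exact Matrix.trace_single_eq_same e (1:ℂ)
  have hf'c₁ : f' (σ c₀) = N * M := by
    rw [hf'_def, Function.update_of_ne hxc, Function.update_self, hfN,
      hfM (σ c₀) hc₁ hxc]
  have hf'other : ∀ c : α, c ≠ c₀ → c ≠ σ c₀ → f' c = f c := by
    intro c h1 h2
    rw [hf'_def, Function.update_of_ne h1, Function.update_of_ne h2]
  by_cases h2 : σ (σ c₀) = c₀
  · -- base case : σ is a swap, contracted perm is 1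
    have hswap : σ = Equiv.swap c₀ (σ c₀) := hσ.eq_swap_of_apply_apply_eq_self hxc h2
    have hone : Equiv.swap c₀ (σ c₀) * σ = 1 := by
      nth_rewrite 2 [hswap]
      exact Equiv.swap_mul_self _ _
    have hmval : m = 2 := by
      rw [← hm]; nth_rewrite 1 [hswap]
      rw [Equiv.Perm.card_support_swap hxc.symm]
    rw [hone, Tsum_one]
    have hsupp : σ.support = {c₀, σ c₀} := by
      nth_rewrite 1 [hswap]; exact Equiv.Perm.support_swap hxc.symm
    have hc₁x : σ c₀ ∈ Finset.univ.erase c₀ := Finset.mem_erase.2 ⟨hxc, Finset.mem_univ _⟩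
    rw [← Finset.mul_prod_erase Finset.univ _ (Finset.mem_univ c₀),
      ← Finset.mul_prod_erase _ _ hc₁x, hf'c₀, htrE, hf'c₁, one_mul]
    have hsets : (Finset.univ.erase c₀).erase (σ c₀) = σ.supportᶜ := by
      rw [hsupp]
      ext z
      simp only [Finset.mem_erase, Finset.mem_univ, and_true, Finset.mem_compl,
        Finset.mem_insert, Finset.mem_singleton, not_or]
      tauto
    rw [hsets, hmval]
    congr 1
    · rw [pow_one]
    · exact Finset.prod_congr rfl fun c hc => by
        rw [hf'other c
          (fun h => by simp [hsupp, h] at hc)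
          (fun h => by simp [hsupp, h] at hc)]
  · -- inductive step
    have hσ' : (Equiv.swap c₀ (σ c₀) * σ).IsCycle := hσ.swap_mul hxc h2
    have hsupp' : (Equiv.swap c₀ (σ c₀) * σ).support = σ.support \ {c₀} :=
      Equiv.Perm.support_swap_mul_eq σ c₀ h2
    have hcard' : (Equiv.swap c₀ (σ c₀) * σ).support.card = m - 1 := by
      rw [hsupp', Finset.sdiff_singleton_eq_erase, Finset.card_erase_of_mem hc₀, hm]
    have hc₁' : σ c₀ ∈ (Equiv.swap c₀ (σ c₀) * σ).support := by
      rw [hsupp']; exact Finset.mem_sdiff.2 ⟨hc₁, by simp [hxc]⟩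
    have hstep := ih (m - 1) (by omega) (Equiv.swap c₀ (σ c₀) * σ) f' (N * M) (σ c₀)
      hσ' hcard' hc₁' hf'c₁
      (fun c hc hne => by
        rw [hsupp'] at hc
        rcases Finset.mem_sdiff.1 hc with ⟨hc1, hc2⟩
        have hcc₀ : c ≠ c₀ := by simpa using hc2
        rw [hf'other c hcc₀ hne]
        exact hfM c hc1 hcc₀)
    rw [hstep]
    have hNm : (N * M) * M ^ (m - 1 - 1) = N * M ^ (m - 1) := by
      rw [mul_assoc, ← pow_succ']
      congr 2
      omega
    rw [hNm]
    congr 1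
    have hcompl : (Equiv.swap c₀ (σ c₀) * σ).supportᶜ = insert c₀ σ.supportᶜ := by
      rw [hsupp']
      ext z
      simp [not_and_or, or_comm]
      tauto
    rw [hcompl, Finset.prod_insert (by simp [hc₀]), hf'c₀, htrE, one_mul]
    refine Finset.prod_congr rfl fun c hc => ?_
    have hc' : c ∉ σ.support := by simpa using hc
    exact congrArg Matrix.trace (hf'other c (fun h => hc' (h ▸ hc₀)) (fun h => hc' (h ▸ hc₁)))

end AuxTsum

lemma trace_pow_eq_sum_eigenvalues {m : Type*} [Fintype m] [DecidableEq m]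
    {M : Matrix m m ℂ} (hM : M.IsHermitian) (ℓ : ℕ) :
    (M ^ ℓ).trace = ∑ i, ((hM.eigenvalues i : ℂ)) ^ ℓ := by
  set U : Matrix m m ℂ := (Matrix.IsHermitian.eigenvectorUnitary hM : Matrix m m ℂ) with hU_def
  have hU1 : U * star U = 1 :=
    Matrix.mem_unitaryGroup_iff.mp (Matrix.IsHermitian.eigenvectorUnitary hM).2
  have hU2 : star U * U = 1 :=
    Matrix.mem_unitaryGroup_iff'.mp (Matrix.IsHermitian.eigenvectorUnitary hM).2
  set D : Matrix m m ℂ := Matrix.diagonal (RCLike.ofReal ∘ hM.eigenvalues) with hD_def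
  have key : ∀ j : ℕ, (U * D * star U) ^ j = U * D ^ j * star U := by
    intro j
    induction j with
    | zero => simp [hU1]
    | succ j ihj =>
      rw [pow_succ, ihj, pow_succ]
      simp only [mul_assoc]
      rw [← mul_assoc (star U) U (D * star U), hU2, one_mul, ← mul_assoc (D ^ j) D (star U)]
  conv_lhs => rw [hM.spectral_theorem, Unitary.conjStarAlgAut_apply, key]
  rw [Matrix.trace_mul_cycle, hU2, one_mul, hD_def, Matrix.diagonal_pow,
    Matrix.trace_diagonal]
  simp


lemma statePow_posSemidef (ρ : Matrix (Fin n → Fin d) (Fin n → Fin d) ℂ)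
    (hρ : ρ.PosSemidef) (k : ℕ) : (statePow ρ k).PosSemidef := by
  open scoped MatrixOrder in
  obtain ⟨B, hB⟩ := CStarAlgebra.nonneg_iff_eq_star_mul_self.mp hρ.nonneg
  rw [Matrix.star_eq_conjTranspose] at hB
  have : statePow ρ k = (statePow B k)ᴴ * statePow B k := by
    ext x y
    rw [Matrix.mul_apply]
    simp only [statePow, Matrix.conjTranspose_apply, Matrix.of_apply, hB, Matrix.mul_apply,
      Matrix.conjTranspose_apply]
    rw [Fintype.prod_sum fun c t => star (B t (x c)) * B t (y c)]
    refine Finset.sum_congr rfl fun z _ => ?_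
    rw [star_prod, ← Finset.prod_mul_distrib]
  rw [this]
  exact Matrix.posSemidef_conjTranspose_mul_self _

lemma statePow_trace (ρ : Matrix (Fin n → Fin d) (Fin n → Fin d) ℂ)
    (htr : ρ.trace = 1) (k : ℕ) : (statePow ρ k).trace = 1 := by
  simp only [Matrix.trace, Matrix.diag, statePow, Matrix.of_apply]
  rw [← Fintype.prod_sum fun (c : Fin k) (t : Fin n → Fin d) => ρ t t]
  simp only [Matrix.trace, Matrix.diag] at htr
  simp [htr]

lemma copyPerm_invariance (ρ : Matrix (Fin n → Fin d) (Fin n → Fin d) ℂ) (π : Equiv.Perm (Fin k)) :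
    copyPerm n d π * statePow ρ k * (copyPerm n d π)ᴴ = statePow ρ k := by
  have hPS : ∀ x y, (copyPerm n d π * statePow ρ k) x y = statePow ρ k (x ∘ ⇑π) y := by
    intro x y
    rw [Matrix.mul_apply]
    rw [Finset.sum_eq_single (x ∘ ⇑π)]
    · simp only [copyPerm, Matrix.of_apply]
      rw [if_pos, one_mul]
      funext c; simp
    · intro z _ hz
      simp only [copyPerm, Matrix.of_apply]
      rw [if_neg, zero_mul]
      intro h
      apply hz
      funext c
      rw [h]; simp
    · simp
  ext x y
  rw [Matrix.mul_apply]
  rw [Finset.sum_eq_single (y ∘ ⇑π)]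
  · rw [hPS]
    simp only [Matrix.conjTranspose_apply, copyPerm, Matrix.of_apply]
    rw [if_pos (by funext c; simp), star_one, mul_one]
    simp only [statePow, Matrix.of_apply, Function.comp_apply]
    exact Equiv.prod_comp π fun c => ρ (x c) (y c)
  · intro w _ hw
    simp only [Matrix.conjTranspose_apply, copyPerm, Matrix.of_apply]
    rw [if_neg, star_zero, mul_zero]
    intro h
    apply hw
    funext c
    rw [h]; simp
  · simp


-- trace of the partial trace
lemma ptrace_trace (A : Finset (Fin n)) (ρ : Matrix (Fin n → Fin d) (Fin n → Fin d) ℂ) :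
    (ptrace A ρ).trace = ρ.trace := by
  classical
  set e := Equiv.piEquivPiSubtypeProd (fun i : Fin n => i ∈ A) (fun _ => Fin d) with he
  simp only [Matrix.trace, Matrix.diag, ptrace, Matrix.of_apply]
  rw [show (∑ x : Fin n → Fin d, ρ x x) = ∑ p : ({i // i ∈ A} → Fin d) × ({i // i ∉ A} → Fin d),
      ρ (e.symm p) (e.symm p) from (Equiv.sum_comp e.symm (fun w => ρ w w)).symm,
    Fintype.sum_prod_type]
  rfl

-- reduction of the trace against the permutation operator to a Tsum
set_option maxHeartbeats 1600000 in
lemma perm_trace_eq_Tsum (A : Finset (Fin n)) (ρ : Matrix (Fin n → Fin d) (Fin n → Fin d) ℂ)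
    (σ : Equiv.Perm (Fin k)) :
    (permOnSubsys d A σ * statePow ρ k).trace = Tsum σ⁻¹ (fun _ => ptrace A ρ) := by
  classical
  set e := Equiv.piEquivPiSubtypeProd (fun i : Fin n => i ∈ A) (fun _ => Fin d) with he
  set Xmap : (Fin k → Fin n → Fin d) → (Fin k → Fin n → Fin d) := fun y c =>
    fun i => if i ∈ A then y (σ⁻¹ c) i else y c i with hX
  have step1 : (permOnSubsys d A σ * statePow ρ k).trace
      = ∑ y : Fin k → Fin n → Fin d, ∏ c, ρ (y c) (Xmap y c) := by
    simp only [Matrix.trace, Matrix.diag, Matrix.mul_apply]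
    rw [Finset.sum_comm]
    refine Finset.sum_congr rfl fun y _ => ?_
    have hcond : ∀ x : Fin k → Fin n → Fin d,
        (∀ (c : Fin k) (i : Fin n), x c i = if i ∈ A then y (σ⁻¹ c) i else y c i) ↔ x = Xmap y := by
      intro x
      rw [funext_iff]
      refine forall_congr' fun c => ?_
      rw [funext_iff]
    calc (∑ x, permOnSubsys d A σ x y * statePow ρ k y x)
        = ∑ x, (if x = Xmap y then 1 else 0) * statePow ρ k y x := by
          refine Finset.sum_congr rfl fun x _ => ?_
          simp only [permOnSubsys, Matrix.of_apply]
          rw [if_congr (hcond x) rfl rfl]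
      _ = statePow ρ k y (Xmap y) := by
          simp only [ite_mul, one_mul, zero_mul]
          rw [Finset.sum_ite_eq' Finset.univ (Xmap y) (fun x => statePow ρ k y x)]
          simp
      _ = ∏ c, ρ (y c) (Xmap y c) := rfl
  rw [step1]
  set E2 : ((Fin k → ({i // i ∈ A} → Fin d)) × (Fin k → ({i // i ∉ A} → Fin d)))
      ≃ (Fin k → Fin n → Fin d) :=
    (Equiv.arrowProdEquivProdArrow (Fin k) _ _).symm.trans
      (Equiv.piCongrRight fun _ => e.symm) with hE2
  rw [← Equiv.sum_comp E2 (fun y => ∏ c, ρ (y c) (Xmap y c)), Fintype.sum_prod_type]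
  have hE2app : ∀ u v c, E2 (u, v) c = e.symm (u c, v c) := fun u v c => rfl
  have hsymm : ∀ (x : {i // i ∈ A} → Fin d) (z : {i // i ∉ A} → Fin d) (i : Fin n),
      e.symm (x, z) i = if h : i ∈ A then x ⟨i, h⟩ else z ⟨i, h⟩ := fun x z i => rfl
  have hXE2 : ∀ u v c, Xmap (E2 (u, v)) c = e.symm (u (σ⁻¹ c), v c) := by
    intro u v c
    funext i
    show (if i ∈ A then E2 (u, v) (σ⁻¹ c) i else E2 (u, v) c i) = _
    rw [hE2app, hE2app, hsymm, hsymm, hsymm]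
    by_cases h : i ∈ A
    · rw [if_pos h, dif_pos h, dif_pos h]
    · rw [if_neg h, dif_neg h, dif_neg h]
  rw [Tsum]
  refine Finset.sum_congr rfl fun u _ => ?_
  calc (∑ v : Fin k → ({i // i ∉ A} → Fin d), ∏ c, ρ (E2 (u, v) c) (Xmap (E2 (u, v)) c))
      = ∑ v : Fin k → ({i // i ∉ A} → Fin d), ∏ c, ρ (e.symm (u c, v c)) (e.symm (u (σ⁻¹ c), v c)) := by
        refine Finset.sum_congr rfl fun v _ => Finset.prod_congr rfl fun c _ => ?_
        rw [hE2app, hXE2]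
    _ = ∏ c, ∑ z, ρ (e.symm (u c, z)) (e.symm (u (σ⁻¹ c), z)) :=
        (Fintype.prod_sum fun c z => ρ (e.symm (u c, z)) (e.symm (u (σ⁻¹ c), z))).symm
    _ = ∏ c, ptrace A ρ (u c) (u (σ⁻¹ c)) := by
        refine Finset.prod_congr rfl fun c _ => ?_
        simp only [ptrace, Matrix.of_apply]
        refine Finset.sum_congr rfl fun z _ => ?_
        rw [show (fun i => if h : i ∈ A then u c ⟨i, h⟩ else z ⟨i, h⟩) = e.symm (u c, z) from rfl,
          show (fun i => if h : i ∈ A then u (σ⁻¹ c) ⟨i, h⟩ else z ⟨i, h⟩) = e.symm (u (σ⁻¹ c), z) from rfl]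
    _ = ∏ c, ptrace A ρ (u ((σ⁻¹)⁻¹ c)) (u c) := by
        rw [← Equiv.prod_comp σ (fun c => ptrace A ρ (u c) (u (σ⁻¹ c)))]
        refine Finset.prod_congr rfl fun c _ => ?_
        simp


/-- Symmetric extension relaxation (necessity): if the marginal spectra `μ_A`, `A ∈ 𝒜`,
come from a joint state `ρ` on `(ℂ^d)^⊗n`, then for every `k` the symmetric extension
`σ = ρ^⊗k` is positive semidefinite, has trace one, is invariant under the diagonal
`S_k`-action permuting copies, and satisfies
`tr(η((α₁...α_ℓ)^A) σ) = Σᵢ (μ_A)ᵢ^ℓ` for all `ℓ`-cycles with `ℓ ≤ k` and all `A ∈ 𝒜`. -/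
theorem symmetric_extension_relaxation (n d k : ℕ) (𝒜 : Finset (Finset (Fin n)))
    (ρ : Matrix (Fin n → Fin d) (Fin n → Fin d) ℂ)
    (hρ : ρ.PosSemidef) (htr : ρ.trace = 1)
    (μ : ∀ A : Finset (Fin n), ({i // i ∈ A} → Fin d) → ℝ)
    (hμ : ∀ A ∈ 𝒜, ∃ hH : (ptrace A ρ).IsHermitian, μ A = hH.eigenvalues) :
    (statePow ρ k).PosSemidef ∧ (statePow ρ k).trace = 1 ∧
      (∀ π : Equiv.Perm (Fin k),
        copyPerm n d π * statePow ρ k * (copyPerm n d π)ᴴ = statePow ρ k) ∧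
      (∀ A ∈ 𝒜, ∀ (ℓ : ℕ) (σ : Equiv.Perm (Fin k)),
        σ.IsCycle → σ.support.card = ℓ → ℓ ≤ k →
        (permOnSubsys d A σ * statePow ρ k).trace = ∑ x, ((μ A x : ℂ)) ^ ℓ) := by
  obtain hPSD := statePow_posSemidef ρ hρ k
  refine ⟨hPSD, statePow_trace ρ htr k, fun π => copyPerm_invariance ρ π, ?_⟩
  intro A hA ℓ σ hcyc hcard hlk
  obtain ⟨hH, hμA⟩ := hμ A hA
  have hne : Nonempty ({i // i ∈ A} → Fin d) := by
    rcases Nat.eq_zero_or_pos d with hd | hd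
    · subst hd
      rcases Finset.eq_empty_or_nonempty A with h0 | ⟨i0, hi0⟩
      · exact ⟨fun i => absurd i.2 (by simp [h0])⟩
      · exfalso
        haveI hempty : IsEmpty (Fin n → Fin 0) := ⟨fun f => (f i0).elim0⟩
        have h0' : ρ.trace = 0 := by simp [Matrix.trace]
        rw [htr] at h0'
        exact one_ne_zero h0'
    · exact ⟨fun _ => ⟨0, hd⟩⟩
  obtain ⟨e0⟩ := hne
  have hinv : (σ⁻¹).IsCycle := hcyc.inv
  have hsupp : (σ⁻¹).support = σ.support := Equiv.Perm.support_inv σ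
  have hcard' : (σ⁻¹).support.card = ℓ := by rw [hsupp, hcard]
  have hl2 : 2 ≤ ℓ := hcard ▸ hcyc.two_le_card_support
  obtain ⟨c₀, hc₀⟩ : ∃ c₀, c₀ ∈ (σ⁻¹).support := by
    apply Finset.card_pos.mp
    rw [hcard']
    omega
  have hM1 : (ptrace A ρ).trace = 1 := by rw [ptrace_trace]; exact htr
  rw [perm_trace_eq_Tsum A ρ σ,
    Tsum_cycle e0 (ptrace A ρ) ℓ σ⁻¹ (fun _ => ptrace A ρ) (ptrace A ρ) c₀ hinv hcard' hc₀ rfl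
      (fun c _ _ => rfl)]
  have hpow : ptrace A ρ * ptrace A ρ ^ (ℓ - 1) = ptrace A ρ ^ ℓ := by
    rw [← pow_succ']
    congr 1
    omega
  rw [hpow]
  simp only [hM1, Finset.prod_const_one, mul_one]
  rw [trace_pow_eq_sum_eigenvalues hH ℓ, hμA]
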